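/- Let θ : ℝ → (−∞,1) be increasing with θ(t) ≥ t/(t+1) for all t ≥ 0. If x ≥ 0 and F(x) ≥ 0 componentwise satisfy θ(x_i/r) + θ(F_i(x)/r) = 1 for all i, then x_i·F_i(x) ≤ r² for every i. -/

import Mathlib

/-- If `θ` is increasing with `θ(t) ≥ t/(t+1)` for `t ≥ 0`, and nonnegative `x`, `Fx` satisfy
`θ(x_i/r) + θ(Fx_i/r) = 1` for all `i`, then `x_i·Fx_i ≤ r²` for all `i`. -/
theorem stmt_18 {n : ℕ} (θ : ℝ → ℝ) (hθmono : StrictMono θ)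
    (hθ : ∀ t ≥ (0:ℝ), t / (t + 1) ≤ θ t)
    (r : ℝ) (hr : 0 < r) (x Fx : Fin n → ℝ)
    (hx : ∀ i, 0 ≤ x i) (hFx : ∀ i, 0 ≤ Fx i)
    (heq : ∀ i, θ (x i / r) + θ (Fx i / r) = 1) :
    ∀ i, x i * Fx i ≤ r ^ 2 := by
  intro i
  set a := x i / r with ha'
  set b := Fx i / r with hb'
  have ha : 0 ≤ a := div_nonneg (hx i) hr.le
  have hb : 0 ≤ b := div_nonneg (hFx i) hr.le
  have hA : (0:ℝ) < a + 1 := by linarith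
  have hB : (0:ℝ) < b + 1 := by linarith
  have hsum : a / (a + 1) + b / (b + 1) ≤ 1 := by
    have h1 := hθ a ha
    have h2 := hθ b hb
    have := heq i
    linarith
  rw [div_add_div _ _ (ne_of_gt hA) (ne_of_gt hB), div_le_one (by positivity)] at hsum
  have key : a * b ≤ 1 := by nlinarith
  have hxa : x i = a * r := by rw [ha', div_mul_cancel₀ _ hr.ne']
  have hxb : Fx i = b * r := by rw [hb', div_mul_cancel₀ _ hr.ne']
  rw [hxa, hxb]
  nlinarith [sq_nonneg r]
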